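/- Let I be a strongly stable monomial ideal generated in degree d, with minimal generators f_1 ≺ ... ≺ f_ν in co-lexicographic order, and let a be a vector making I a-determined. Write I' = (f_1,...,f_{ν-1}). Then the colon ideal \hat{I'}^{[a]} : (x^a/f_ν) equals the ideal generated by the variables x_j with j in supp(f_ν) \ {1}, i.e., the variables other than x_1 dividing f_ν. -/

import Mathlib

open MvPolynomial Finsupp

/-- The monomial ideal generated by the monomials with exponent vectors in `S`. -/
noncomputable def monomialIdeal (K : Type*) [Field K] {n : ℕ} (S : Finset (Fin n →₀ ℕ)) :
    Ideal (MvPolynomial (Fin n) K) :=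
  Ideal.span ((fun s => (monomial s (1 : K))) '' S)

/-- Exponent vectors of the generators `x^a / f` of the `a`-dual. -/
noncomputable def dualGens {n : ℕ} (a : Fin n →₀ ℕ) (S : Finset (Fin n →₀ ℕ)) :
    Finset (Fin n →₀ ℕ) :=
  S.image (fun s => a - s)

/-- Strong stability: for every monomial `m ∈ I`, every `x_i | m` and `j < i`,
`m·x_j/x_i ∈ I`. -/
def IsStronglyStable {K : Type*} [Field K] {n : ℕ}
    (I : Ideal (MvPolynomial (Fin n) K)) : Prop :=
  ∀ (s : Fin n →₀ ℕ) (i j : Fin n), monomial s (1 : K) ∈ I →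
    s i ≠ 0 → j < i →
    monomial (s + single j 1 - single i 1) (1 : K) ∈ I

/-- Strict co-lexicographic order. -/
def ColexLT {n : ℕ} (s t : Fin n →₀ ℕ) : Prop :=
  ∃ k : Fin n, s k < t k ∧ ∀ l, k < l → s l = t l

lemma sum_eq_of_le' {n : ℕ} {s g : Fin n →₀ ℕ} (h : s ≤ g)
    (hsum : (s.sum fun _ e => e) = g.sum fun _ e => e) : s = g := by
  have hle := Finsupp.le_def.mp h
  have hadd : s + (g - s) = g := by
    ext k
    have := hle k
    simp only [Finsupp.add_apply, Finsupp.tsub_apply]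
    omega
  have hs : ((s + (g - s)).sum fun _ e => e)
      = (s.sum fun _ e => e) + ((g - s).sum fun _ e => e) :=
    Finsupp.sum_add_index' (fun _ => rfl) (fun _ _ _ => rfl)
  rw [hadd, hsum] at hs
  have h0 : ((g - s).sum fun _ e => e) = 0 := by omega
  have hz : g - s = 0 := by
    ext k
    by_contra hk
    have hk' : k ∈ (g - s).support := Finsupp.mem_support_iff.mpr hk
    rw [Finsupp.sum, Finset.sum_eq_zero_iff] at h0
    exact hk (h0 k hk')
  exact le_antisymm h (tsub_eq_zero_iff_le.mp hz)

/-- For an `a`-determined strongly stable ideal generated in degree `d` with minimal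
generators `f_1 ≺ ⋯ ≺ f_ν` (co-lex), `ν ≥ 2`, writing `I' = (f_1,…,f_{ν-1})`, the colon
ideal `\hat{I'}^{[a]} : (x^a/f_ν)` is generated by the variables `x_j`, `j ∈ supp(f_ν) \ {1}`.
(Variables are indexed by `Fin n`, with `x_1` corresponding to the index `0`.) -/
theorem colon_dual_eq_span_vars (K : Type*) [Field K] {n d : ℕ}
    (a : Fin n →₀ ℕ) (S : Finset (Fin n →₀ ℕ))
    (hstable : IsStronglyStable (monomialIdeal K S))
    (hdeg : ∀ s ∈ S, (s.sum fun _ e => e) = d)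
    (hdet : ∀ s ∈ S, s ≤ a)
    (hcard : 2 ≤ S.card)
    (f : Fin n →₀ ℕ) (hf : f ∈ S) (hmax : ∀ g ∈ S, g ≠ f → ColexLT g f) :
    Submodule.colon (monomialIdeal K (dualGens a (S.erase f)))
        (Ideal.span {monomial (a - f) (1 : K)}) =
      Ideal.span ((fun j => (X j : MvPolynomial (Fin n) K)) ''
        {j | j ∈ f.support ∧ (j : ℕ) ≠ 0}) := by
  have hfa := Finsupp.le_def.mp (hdet f hf)
  apply le_antisymm
  · -- colon ⊆ span of variables
    intro p hp
    rw [Ideal.mem_colon_span_singleton, monomialIdeal, mem_ideal_span_monomial_image] at hp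
    rw [mem_ideal_span_X_image]
    intro m hm
    have hmem : m + (a - f) ∈ (p * monomial (a - f) (1 : K)).support := by
      rw [MvPolynomial.mem_support_iff, coeff_mul_monomial, mul_one]
      exact MvPolynomial.mem_support_iff.mp hm
    obtain ⟨u, hu, hule⟩ := hp _ hmem
    obtain ⟨s, hs, rfl⟩ := Finset.mem_image.mp (by exact_mod_cast hu : u ∈ (S.erase f).image (fun s => a - s))
    obtain ⟨hsne, hsS⟩ := Finset.mem_erase.mp hs
    have hsa := Finsupp.le_def.mp (hdet s hsS)
    obtain ⟨k, hk, hkl⟩ := hmax s hsS hsne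
    have hk0 : (k : ℕ) ≠ 0 := by
      intro hk0
      apply hsne
      apply sum_eq_of_le' _ (by rw [hdeg s hsS, hdeg f hf])
      intro l
      rcases Nat.eq_zero_or_pos (l : ℕ) with hl | hl
      · have : l = k := Fin.ext (by omega)
        exact this ▸ hk.le
      · exact (hkl l (by simpa [Fin.lt_def, hk0] using hl)).le
    have hle := Finsupp.le_def.mp hule k
    simp only [Finsupp.add_apply, Finsupp.tsub_apply] at hle
    have hfk := hfa k
    have hsk := hsa k
    refine ⟨k, ⟨Finsupp.mem_support_iff.mpr (by omega), hk0⟩, by omega⟩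
  · -- span of variables ⊆ colon
    rw [Ideal.span_le]
    rintro _ ⟨j, ⟨hjf, hj0⟩, rfl⟩
    have hfj : f j ≠ 0 := Finsupp.mem_support_iff.mp hjf
    set z : Fin n := ⟨0, j.pos⟩ with hz
    have hzj : z < j := by
      simp [Fin.lt_def, hz, Nat.pos_of_ne_zero hj0]
    have hfI : monomial f (1 : K) ∈ monomialIdeal K S :=
      Ideal.subset_span ⟨f, by simp [hf], rfl⟩
    set g : (Fin n →₀ ℕ) := f + single z 1 - single j 1 with hgdef
    have hgI := hstable f j z hfI hfj hzj
    -- pointwise values of g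
    have hgval : ∀ l, g l = f l + (single z 1) l - (single j 1) l := by
      intro l; simp [hgdef, Finsupp.tsub_apply]
    have hkey : g + single j 1 = f + single z 1 := by
      ext l
      have := hgval l
      have h1 : (single j 1 : Fin n →₀ ℕ) l ≤ f l + (single z 1) l := by
        rcases eq_or_ne l j with rfl | hlj
        · simp; omega
        · simp [Finsupp.single_apply, Ne.symm hlj]
      simp only [Finsupp.add_apply] at *
      omega
    have hsumg : (g.sum fun _ e => e) = d := by
      have h1 : ((g + single j 1).sum fun (_ : Fin n) (e : ℕ) => e)
          = (g.sum fun _ e => e) + ((single j 1 : Fin n →₀ ℕ).sum fun _ e => e) :=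
        Finsupp.sum_add_index' (fun _ => rfl) (fun _ _ _ => rfl)
      have h2 : ((f + single z 1).sum fun (_ : Fin n) (e : ℕ) => e)
          = (f.sum fun _ e => e) + ((single z 1 : Fin n →₀ ℕ).sum fun _ e => e) :=
        Finsupp.sum_add_index' (fun _ => rfl) (fun _ _ _ => rfl)
      rw [hkey] at h1
      rw [Finsupp.sum_single_index rfl] at h1 h2
      rw [hdeg f hf] at h2
      omega
    -- g ∈ S
    rw [monomialIdeal, mem_ideal_span_monomial_image] at hgI
    obtain ⟨s, hsS, hsg⟩ := hgI g (by
      simp [support_monomial, hgdef])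
    have hsS' : s ∈ S := by exact_mod_cast hsS
    have hseq : s = g := sum_eq_of_le' hsg (by rw [hdeg s hsS', hsumg])
    have hgS : g ∈ S := hseq ▸ hsS'
    have hgj : g j = f j - 1 := by
      have hzj0 : (single z 1 : Fin n →₀ ℕ) j = 0 := by
        simp [Finsupp.single_apply, hz, Fin.ext_iff, Ne.symm hj0]
      rw [hgval j, hzj0]
      simp [Finsupp.single_apply]
    have hgne : g ≠ f := by
      intro h
      have := congrArg (fun v => v j) h
      omega
    have hga := Finsupp.le_def.mp (hdet g hgS)
    -- now show X j ∈ colon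
    rw [SetLike.mem_coe, Ideal.mem_colon_span_singleton]
    have hXmon : (X j : MvPolynomial (Fin n) K) * monomial (a - f) 1
        = monomial (single j 1 + (a - f)) 1 := by
      rw [X, monomial_mul, one_mul]
    rw [hXmon, monomialIdeal, mem_ideal_span_monomial_image]
    intro xi hxi
    have hxi' : xi = single j 1 + (a - f) := by
      symm; simpa [support_monomial] using hxi
    subst hxi'
    refine ⟨a - g, ?_, ?_⟩
    · exact_mod_cast Finset.mem_image.mpr ⟨g, Finset.mem_erase.mpr ⟨hgne, hgS⟩, rfl⟩
    · intro l
      have hgl := hgval l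
      have hfl := hfa l
      have hgal := hga l
      simp only [Finsupp.add_apply, Finsupp.tsub_apply]
      rcases eq_or_ne l j with rfl | hlj
      · simp only [Finsupp.single_apply, if_pos rfl] at *
        omega
      · have h1 : (single j 1 : Fin n →₀ ℕ) l = 0 := by
          simp [Finsupp.single_apply, Ne.symm hlj]
        rw [h1] at hgl ⊢
        by_cases hlz : l = z
        · have h2 : (single z 1 : Fin n →₀ ℕ) l = 1 := by
            simp [Finsupp.single_apply, hlz.symm]
          omega
        · have h2 : (single z 1 : Fin n →₀ ℕ) l = 0 := by
            simp [Finsupp.single_apply, Ne.symm hlz]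
          omega
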